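/- For the function f(x) = (1/2)xᵀAx + bᵀx + (ρ/3)‖x‖³ on ℝᵈ with A symmetric and ρ > 0, if s is a point satisfying (A + ρ‖s‖I)s + b = 0 and A + ρ‖s‖I ⪰ 0, then for every x ∈ ℝᵈ, f(x) = f(s) + (1/2)(x−s)ᵀ(A + ρ‖s‖I)(x−s) + (ρ/6)(‖s‖−‖x‖)²(‖s‖+2‖x‖). In particular, s is a global minimizer of f. -/

import Mathlib

open scoped RealInnerProductSpace

noncomputable def Am {n : ℕ} (A : Matrix (Fin n) (Fin n) ℝ) :
    EuclideanSpace ℝ (Fin n) →L[ℝ] EuclideanSpace ℝ (Fin n) :=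
  Matrix.toEuclideanCLM (𝕜 := ℝ) A

/-- f(x) = (1/2)xᵀAx + bᵀx + (ρ/3)‖x‖³ -/
noncomputable def cubicF {n : ℕ} (A : Matrix (Fin n) (Fin n) ℝ)
    (b : EuclideanSpace ℝ (Fin n)) (ρ : ℝ) (x : EuclideanSpace ℝ (Fin n)) : ℝ :=
  (1/2) * ⟪x, Am A x⟫ + ⟪b, x⟫ + (ρ/3) * ‖x‖^3

/-- ∇f(x) = Ax + b + ρ‖x‖x -/
noncomputable def gradF {n : ℕ} (A : Matrix (Fin n) (Fin n) ℝ)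
    (b : EuclideanSpace ℝ (Fin n)) (ρ : ℝ) (x : EuclideanSpace ℝ (Fin n)) :
    EuclideanSpace ℝ (Fin n) := Am A x + b + (ρ * ‖x‖) • x

lemma Am_symm {n : ℕ} {A : Matrix (Fin n) (Fin n) ℝ} (hA : A.IsSymm)
    (x y : EuclideanSpace ℝ (Fin n)) : ⟪Am A x, y⟫ = ⟪x, Am A y⟫ := by
  have hHerm : A.IsHermitian := by
    rw [Matrix.IsHermitian]; simpa using hA.eq
  have := (Matrix.isHermitian_iff_isSymmetric.mp hHerm) x y
  exact this

theorem stmt0 {n : ℕ} (A : Matrix (Fin n) (Fin n) ℝ) (hA : A.IsSymm)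
    (b : EuclideanSpace ℝ (Fin n)) (ρ : ℝ) (hρ : 0 < ρ)
    (s : EuclideanSpace ℝ (Fin n))
    (hs1 : Am A s + (ρ * ‖s‖) • s + b = 0)
    (hs2 : ∀ x : EuclideanSpace ℝ (Fin n), 0 ≤ ⟪x, Am A x + (ρ * ‖s‖) • x⟫) :
    (∀ x : EuclideanSpace ℝ (Fin n),
      cubicF A b ρ x = cubicF A b ρ s
        + (1/2) * ⟪x - s, Am A (x - s) + (ρ * ‖s‖) • (x - s)⟫
        + (ρ/6) * (‖s‖ - ‖x‖)^2 * (‖s‖ + 2 * ‖x‖)) ∧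
    (∀ x : EuclideanSpace ℝ (Fin n), cubicF A b ρ s ≤ cubicF A b ρ x) := by
  have hb : b = -(Am A s + (ρ * ‖s‖) • s) := eq_neg_of_add_eq_zero_right hs1
  have key : ∀ x : EuclideanSpace ℝ (Fin n),
      cubicF A b ρ x = cubicF A b ρ s
        + (1/2) * ⟪x - s, Am A (x - s) + (ρ * ‖s‖) • (x - s)⟫
        + (ρ/6) * (‖s‖ - ‖x‖)^2 * (‖s‖ + 2 * ‖x‖) := by
    intro x
    have hsx : ⟪x, Am A s⟫ = ⟪s, Am A x⟫ := by
      rw [← Am_symm hA s x, real_inner_comm]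
    have hxs : ⟪x, s⟫ = ⟪s, x⟫ := real_inner_comm s x
    have hAsx : ⟪Am A s, x⟫ = ⟪s, Am A x⟫ := Am_symm hA s x
    have hAss : ⟪Am A s, s⟫ = ⟪s, Am A s⟫ := Am_symm hA s s
    have hss : ⟪s, s⟫ = ‖s‖ ^ 2 := real_inner_self_eq_norm_sq s
    have hxx : ⟪x, x⟫ = ‖x‖ ^ 2 := real_inner_self_eq_norm_sq x
    have hsle : (0:ℝ) ≤ ‖s‖ := norm_nonneg s
    have hsq : ‖s‖ * ‖s‖ * ‖s‖ = ‖s‖ ^ 3 := by ring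
    simp only [cubicF, hb, map_sub, inner_sub_left, inner_sub_right, inner_add_left,
      inner_add_right, inner_neg_left, inner_neg_right, real_inner_smul_left,
      real_inner_smul_right, hsx, hxs, hss, hxx, hAsx, hAss]
    ring
  refine ⟨key, fun x => ?_⟩
  rw [key x]
  have h1 := hs2 (x - s)
  have h2 : 0 ≤ (ρ/6) * (‖s‖ - ‖x‖)^2 * (‖s‖ + 2 * ‖x‖) := by positivity
  linarith
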